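/- Let n > 1 and let (X, δ) be a symmetric diversity with |X| = n, δ(A) = f(|A| − 1). Then there exist nonnegative coefficients λ_1, …, λ_{n−1} such that f(k) ≤ Σ_{i=1}^{n−1} λ_i·min(i, k) ≤ 2f(k) for all k = 0, …, n−1. -/

import Mathlib

/-- Envelope function: `L k = min over j ∈ [1,N] of f j * (1 + k/j)`, with `L 0 = 0`. -/
noncomputable def envL (f : ℕ → ℝ) (N k : ℕ) : ℝ :=
  if h : 1 ≤ N ∧ k ≠ 0 then
    (Finset.Icc 1 N).inf' (Finset.nonempty_Icc.mpr h.1) (fun j => f j * (1 + (k : ℝ) / (j : ℝ)))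
  else 0

/-- Coefficients from second differences of `g`. -/
noncomputable def auxLam (g : ℕ → ℝ) (N i : ℕ) : ℝ :=
  if i = N then g N - g (N - 1) else 2 * g i - g (i - 1) - g (i + 1)

lemma auxT (g : ℕ → ℝ) (N k : ℕ) (hk1 : 1 ≤ k) (hk : k ≤ N) :
    ∑ i ∈ Finset.Icc k N, auxLam g N i = g k - g (k - 1) := by
  have h1 : Finset.Icc k N = Finset.Ico k (N + 1) := by
    ext x; simp [Finset.mem_Icc, Finset.mem_Ico]
  set D : ℕ → ℝ := fun t => if k + t ≤ N then g (k + t) - g (k + t - 1) else 0 with hD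
  rw [h1, Finset.sum_Ico_eq_sum_range]
  have key : ∀ t ∈ Finset.range (N + 1 - k), auxLam g N (k + t) = D t - D (t + 1) := by
    intro t ht
    simp only [Finset.mem_range] at ht
    have h2 : k + t ≤ N := by omega
    rcases eq_or_lt_of_le h2 with he | hl
    · have hnot : ¬ (k + (t + 1) ≤ N) := by omega
      simp only [auxLam, hD]
      rw [if_pos he, if_pos h2, if_neg hnot, he]
      ring
    · have hne : k + t ≠ N := by omega
      have e2 : k + (t + 1) ≤ N := by omega
      simp only [auxLam, if_neg hne, hD, if_pos h2, if_pos e2]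
      have e3 : k + (t + 1) - 1 = k + t := by omega
      have e4 : k + (t + 1) = k + t + 1 := by omega
      rw [e3, e4]; ring
  rw [Finset.sum_congr rfl key, Finset.sum_range_sub' D]
  have e5 : ¬ (k + (N + 1 - k) ≤ N) := by omega
  have e6 : k + 0 ≤ N := by omega
  simp only [hD, if_pos e6, if_neg e5, Nat.add_zero, sub_zero]

lemma auxS (g : ℕ → ℝ) (N : ℕ) (hg0 : g 0 = 0) :
    ∀ k, k ≤ N → ∑ i ∈ Finset.Icc 1 N, auxLam g N i * (↑(min i k) : ℝ) = g k := by
  intro k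
  induction k with
  | zero => intro _; simp [hg0]
  | succ k ih =>
    intro hk
    have hkN : k ≤ N := by omega
    have e : ∑ i ∈ Finset.Icc 1 N, auxLam g N i * (↑(min i (k + 1)) : ℝ)
        = ∑ i ∈ Finset.Icc 1 N, auxLam g N i * (↑(min i k) : ℝ)
          + ∑ i ∈ Finset.Icc 1 N, auxLam g N i * ((↑(min i (k + 1)) : ℝ) - (↑(min i k) : ℝ)) := by
      rw [← Finset.sum_add_distrib]
      exact Finset.sum_congr rfl (fun i _ => by ring)
    rw [e, ih hkN]
    have hIcc : Finset.Icc 1 N = Finset.Ioc 0 N := by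
      ext x; simp [Finset.mem_Icc, Finset.mem_Ioc]; omega
    have hIcc2 : Finset.Icc (k + 1) N = Finset.Ioc k N := by
      ext x; simp [Finset.mem_Icc, Finset.mem_Ioc]
    have hsplit := Finset.sum_Ioc_consecutive
      (fun i => auxLam g N i * ((↑(min i (k + 1)) : ℝ) - (↑(min i k) : ℝ)))
      (Nat.zero_le k) hkN
    have hzero' : ∑ i ∈ Finset.Ioc 0 k,
        auxLam g N i * ((↑(min i (k + 1)) : ℝ) - (↑(min i k) : ℝ)) = 0 := by
      apply Finset.sum_eq_zero
      intro i hi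
      simp only [Finset.mem_Ioc] at hi
      rw [min_eq_left (by omega), min_eq_left (by omega)]
      ring
    have hrest : ∑ i ∈ Finset.Ioc k N,
        auxLam g N i * ((↑(min i (k + 1)) : ℝ) - (↑(min i k) : ℝ))
        = ∑ i ∈ Finset.Ioc k N, auxLam g N i := by
      apply Finset.sum_congr rfl
      intro i hi
      simp only [Finset.mem_Ioc] at hi
      rw [min_eq_right (by omega), min_eq_right (by omega)]
      push_cast; ring
    rw [hIcc, ← hsplit, hzero', hrest, ← hIcc2, auxT g N (k + 1) (by omega) hk]
    simp only [Nat.add_sub_cancel]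
    ring

theorem stmt_10 {X : Type*} [DecidableEq X] [Fintype X] (n : ℕ) (hn : 1 < n)
    (hcard : Fintype.card X = n) (δ : Finset X → ℝ) (f : ℕ → ℝ)
    (hpos : ∀ A : Finset X, 0 ≤ δ A)
    (hzero : ∀ A : Finset X, δ A = 0 ↔ A.card ≤ 1)
    (htri : ∀ A B C : Finset X, B.Nonempty → δ (A ∪ C) ≤ δ (A ∪ B) + δ (B ∪ C))
    (hδ : ∀ A : Finset X, A.Nonempty → δ A = f (A.card - 1)) :
    ∃ lam : ℕ → ℝ,
      (∀ i, 1 ≤ i → i ≤ n - 1 → 0 ≤ lam i) ∧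
      (∀ k, k ≤ n - 1 →
        f k ≤ ∑ i ∈ Finset.Icc 1 (n - 1), lam i * min i k ∧
        ∑ i ∈ Finset.Icc 1 (n - 1), lam i * min i k ≤ 2 * f k) := by
  set N := n - 1 with hNdef
  have hN : 1 ≤ N := by omega
  -- existence of sets of given cardinality
  have hex : ∀ m, m ≤ n → ∃ A : Finset X, A.card = m := by
    intro m hm
    obtain ⟨t, _, ht⟩ := Finset.exists_subset_card_eq
      (show m ≤ (Finset.univ : Finset X).card by simp [hcard, hm])
    exact ⟨t, ht⟩
  -- f 0 = 0
  have hf0 : f 0 = 0 := by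
    obtain ⟨A, hA⟩ := hex 1 (by omega)
    have hne : A.Nonempty := Finset.card_pos.mp (by omega)
    have h1 := hδ A hne
    have h0 : δ A = 0 := (hzero A).mpr (by omega)
    rw [hA] at h1
    simpa [h0] using h1.symm
  -- nonnegativity
  have hfnn : ∀ j, j ≤ N → 0 ≤ f j := by
    intro j hj
    obtain ⟨A, hA⟩ := hex (j + 1) (by omega)
    have hne : A.Nonempty := Finset.card_pos.mp (by omega)
    have h1 := hδ A hne
    rw [hA, Nat.add_sub_cancel] at h1
    rw [← h1]; exact hpos A
  -- monotone step
  have hmono1 : ∀ k, k + 1 ≤ N → f k ≤ f (k + 1) := by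
    intro k hk
    obtain ⟨A', hA'⟩ := hex (k + 2) (by omega)
    obtain ⟨A, hAsub, hA⟩ := Finset.exists_subset_card_eq (show k + 1 ≤ A'.card by omega)
    have hd : 0 < (A' \ A).card := by rw [Finset.card_sdiff_of_subset hAsub]; omega
    obtain ⟨x, hx⟩ := Finset.card_pos.mp hd
    have hxA : x ∉ A := (Finset.mem_sdiff.mp hx).2
    have htr := htri A {x} ∅ (Finset.singleton_nonempty x)
    rw [Finset.union_empty, Finset.union_empty] at htr
    have hδx : δ {x} = 0 := (hzero _).mpr (by simp)
    have hAne : A.Nonempty := Finset.card_pos.mp (by omega)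
    have hAx : (A ∪ {x}).card = k + 2 := by
      rw [Finset.union_comm, ← Finset.insert_eq, Finset.card_insert_of_notMem hxA, hA]
    have hAxne : (A ∪ {x}).Nonempty := Finset.card_pos.mp (by omega)
    rw [hδ A hAne, hδ _ hAxne, hδx, hA, hAx] at htr
    simpa using htr
  -- monotonicity
  have hmono : ∀ b, b ≤ N → ∀ a, a ≤ b → f a ≤ f b := by
    intro b
    induction b with
    | zero => intro _ a ha; interval_cases a; exact le_refl _
    | succ b ih =>
      intro hb a ha
      rcases Nat.lt_or_ge a (b + 1) with h | h
      · exact le_trans (ih (by omega) a (by omega)) (hmono1 b (by omega))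
      · have : a = b + 1 := by omega
        rw [this]
  -- subadditivity
  have hsubadd : ∀ a b, 1 ≤ a → 1 ≤ b → a + b ≤ N → f (a + b) ≤ f a + f b := by
    intro a b ha hb hab
    obtain ⟨S, hS⟩ := hex (a + b + 1) (by omega)
    obtain ⟨A, hAS, hA⟩ := Finset.exists_subset_card_eq (show a + 1 ≤ S.card by omega)
    obtain ⟨x, hxA⟩ := Finset.card_pos.mp (show 0 < A.card by omega)
    set C := (S \ A) ∪ {x} with hCdef
    have hxS : x ∈ S := hAS hxA
    have hxSA : x ∉ S \ A := by simp [hxA]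
    have hC : C.card = b + 1 := by
      rw [hCdef, Finset.union_comm, ← Finset.insert_eq,
        Finset.card_insert_of_notMem hxSA, Finset.card_sdiff_of_subset hAS, hS, hA]
      omega
    have hAC : A ∪ C = S := by
      rw [hCdef, ← Finset.union_assoc, Finset.union_sdiff_of_subset hAS,
        Finset.union_eq_left.mpr (Finset.singleton_subset_iff.mpr hxS)]
    have hxC : x ∈ C := by simp [hCdef]
    have htr := htri A {x} C (Finset.singleton_nonempty x)
    rw [hAC, Finset.union_eq_left.mpr (Finset.singleton_subset_iff.mpr hxA),
      ← Finset.insert_eq, Finset.insert_eq_self.mpr hxC] at htr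
    rw [hδ S ⟨x, hxS⟩, hδ A ⟨x, hxA⟩, hδ C ⟨x, hxC⟩, hS, hA, hC] at htr
    simpa using htr
  -- key inequality: j * f k ≤ (k + j - 1) * f j
  have hF1 : ∀ k, 1 ≤ k → k ≤ N → ∀ j, 1 ≤ j → j ≤ N →
      (j : ℝ) * f k ≤ ((k : ℝ) + (j : ℝ) - 1) * f j := by
    intro k
    induction k using Nat.strong_induction_on with
    | _ k ih =>
      intro hk1 hkN j hj1 hjN
      have hjr : (1 : ℝ) ≤ (j : ℝ) := by exact_mod_cast hj1
      have hkr : (1 : ℝ) ≤ (k : ℝ) := by exact_mod_cast hk1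
      have hfj : 0 ≤ f j := hfnn j hjN
      rcases le_or_gt k j with h | h
      · have h1 : f k ≤ f j := hmono j hjN k h
        nlinarith
      · have hkj : 1 ≤ k - j := by omega
        have hsum : (k - j) + j = k := by omega
        have hsa := hsubadd (k - j) j hkj hj1 (by omega)
        rw [hsum] at hsa
        have hih := ih (k - j) (by omega) hkj (by omega) j hj1 hjN
        have hcast : ((k - j : ℕ) : ℝ) = (k : ℝ) - (j : ℝ) := by
          push_cast [Nat.cast_sub (le_of_lt h)]; ring
        rw [hcast] at hih
        nlinarith
  -- the envelope function
  set g : ℕ → ℝ := envL f N with hgdef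
  have hg0 : g 0 = 0 := by rw [hgdef]; unfold envL; simp
  have hnemp : (Finset.Icc 1 N).Nonempty := Finset.nonempty_Icc.mpr hN
  have hgval : ∀ k, k ≠ 0 →
      g k = (Finset.Icc 1 N).inf' hnemp (fun j => f j * (1 + (k : ℝ) / (j : ℝ))) := by
    intro k hk
    rw [hgdef]; unfold envL
    rw [dif_pos (⟨hN, hk⟩ : 1 ≤ N ∧ k ≠ 0)]
  have hgle : ∀ k, k ≠ 0 → ∀ j ∈ Finset.Icc 1 N, g k ≤ f j * (1 + (k : ℝ) / (j : ℝ)) := by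
    intro k hk j hj
    rw [hgval k hk]
    exact Finset.inf'_le _ hj
  have hleg : ∀ k : ℕ, k ≠ 0 → ∀ c : ℝ,
      (∀ j ∈ Finset.Icc 1 N, c ≤ f j * (1 + (k : ℝ) / (j : ℝ))) → c ≤ g k := by
    intro k hk c hc
    rw [hgval k hk]
    exact Finset.le_inf' hnemp _ hc
  have hgmem : ∀ k, k ≠ 0 → ∃ j ∈ Finset.Icc 1 N, g k = f j * (1 + (k : ℝ) / (j : ℝ)) := by
    intro k hk
    obtain ⟨j, hj, hje⟩ := Finset.exists_mem_eq_inf' hnemp (fun j => f j * (1 + (k : ℝ) / (j : ℝ)))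
    exact ⟨j, hj, by rw [hgval k hk]; exact hje⟩
  -- f k ≤ g k
  have hlow : ∀ k, 1 ≤ k → k ≤ N → f k ≤ g k := by
    intro k hk1 hkN
    apply hleg k (by omega)
    intro j hj
    simp only [Finset.mem_Icc] at hj
    have hj0 : (0 : ℝ) < j := by exact_mod_cast hj.1
    have hF := hF1 k hk1 hkN j hj.1 hj.2
    have hfj : 0 ≤ f j := hfnn j hj.2
    rw [show f j * (1 + (k : ℝ) / (j : ℝ)) = ((j : ℝ) + k) * f j / j by field_simp,
      le_div_iff₀ hj0]
    nlinarith
  -- g k ≤ 2 f k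
  have hup : ∀ k, 1 ≤ k → k ≤ N → g k ≤ 2 * f k := by
    intro k hk1 hkN
    have h := hgle k (by omega) k (Finset.mem_Icc.mpr ⟨hk1, hkN⟩)
    have hk0 : ((k : ℕ) : ℝ) ≠ 0 := by
      have : (0:ℝ) < k := by exact_mod_cast hk1
      linarith
    rw [div_self hk0] at h
    linarith
  -- g monotone
  have hgmono : ∀ k, g k ≤ g (k + 1) := by
    intro k
    rcases Nat.eq_zero_or_pos k with rfl | hk
    · rw [hg0]
      apply hleg 1 one_ne_zero
      intro j hj
      simp only [Finset.mem_Icc] at hj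
      have hj0 : (0 : ℝ) < j := by exact_mod_cast hj.1
      have hfj := hfnn j hj.2
      positivity
    · apply hleg (k + 1) (by omega)
      intro j hj
      simp only [Finset.mem_Icc] at hj
      have hj0 : (0 : ℝ) < j := by exact_mod_cast hj.1
      have hfj : 0 ≤ f j := hfnn j hj.2
      calc g k ≤ f j * (1 + (k : ℝ) / (j : ℝ)) := hgle k (by omega) j (Finset.mem_Icc.mpr hj)
        _ ≤ f j * (1 + ((k : ℕ) + 1 : ℝ) / (j : ℝ)) := by
            apply mul_le_mul_of_nonneg_left _ hfj
            have h1 : (k : ℝ) / (j : ℝ) ≤ ((k : ℝ) + 1) / (j : ℝ) := by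
              gcongr
              linarith
            linarith
        _ = f j * (1 + ((k + 1 : ℕ) : ℝ) / (j : ℝ)) := by push_cast; ring
  -- g concave
  have hconc : ∀ i, 1 ≤ i → g (i - 1) + g (i + 1) ≤ 2 * g i := by
    intro i hi
    obtain ⟨j, hj, hje⟩ := hgmem i (by omega)
    have hj' := Finset.mem_Icc.mp hj
    have hj0 : (0 : ℝ) < j := by exact_mod_cast hj'.1
    have hfj : 0 ≤ f j := hfnn j hj'.2
    rcases eq_or_lt_of_le hi with h1 | h2
    · -- i = 1
      rw [← h1] at hje ⊢
      simp only [Nat.sub_self, hg0]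
      have h2le := hgle 2 (by omega) j hj
      rw [hje]
      have key : f j * (1 + (2 : ℕ) / (j : ℝ)) ≤ 2 * (f j * (1 + (1 : ℕ) / (j : ℝ))) := by
        push_cast
        have : 2 * (f j * (1 + 1 / (j : ℝ))) - f j * (1 + 2 / (j : ℝ)) = f j := by
          field_simp; ring
        linarith
      push_cast at h2le key ⊢
      linarith
    · -- i ≥ 2
      have hle1 := hgle (i - 1) (by omega) j hj
      have hle2 := hgle (i + 1) (by omega) j hj
      have hcast : ((i - 1 : ℕ) : ℝ) = (i : ℝ) - 1 := by
        rw [Nat.cast_sub (by omega : 1 ≤ i)]; norm_num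
      rw [hcast] at hle1
      push_cast at hle2
      rw [hje]
      have key : f j * (1 + ((i : ℝ) - 1) / (j : ℝ)) + f j * (1 + ((i : ℝ) + 1) / (j : ℝ))
          = 2 * (f j * (1 + (i : ℝ) / (j : ℝ))) := by
        field_simp; ring
      linarith
  -- conclusion
  refine ⟨auxLam g N, ?_, ?_⟩
  · intro i hi1 hiN
    rcases eq_or_ne i N with rfl | hne'
    · unfold auxLam
      rw [if_pos rfl]
      have h := hgmono (N - 1)
      rw [show N - 1 + 1 = N by omega] at h
      linarith
    · unfold auxLam
      rw [if_neg hne']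
      have h := hconc i hi1
      linarith
  · intro k hk
    rw [auxS g N hg0 k hk]
    rcases Nat.eq_zero_or_pos k with rfl | hk1
    · rw [hg0, hf0]; norm_num
    · exact ⟨hlow k hk1 hk, hup k hk1 hk⟩
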